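/- Let A and B be strings over a linearly ordered alphabet, each partitioned into blocks of length m (the last block possibly shorter). Let A' and B' be the strings obtained by replacing each block by its rank in the lexicographic order among all blocks occurring in A and B. Then A ≤lex B if and only if A' ≤lex B'. -/

import Mathlib

namespace StmtAux

variable {α : Type*}

/-- Reference implementation of chunking with chunk size `n+1`. -/
def chunks (n : ℕ) : List α → List (List α)
  | [] => []
  | x :: xs => (x :: xs.take n) :: chunks n (xs.drop n)
  termination_by l => l.length
  decreasing_by
    simp only [List.length_cons]
    rw [List.length_drop]
    omega

lemma chunks_nil (n : ℕ) : chunks n ([] : List α) = [] := by simp [chunks]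

lemma chunks_cons (n : ℕ) (x : α) (xs : List α) :
    chunks n (x :: xs) = (x :: xs.take n) :: chunks n (xs.drop n) := by
  rw [chunks]

lemma chunks_eq_cons (n : ℕ) (l : List α) (h : l ≠ []) :
    chunks n l = l.take (n + 1) :: chunks n (l.drop (n + 1)) := by
  cases l with
  | nil => exact absurd rfl h
  | cons x xs => simp [chunks_cons]

lemma chunks_short (n : ℕ) (l : List α) (h0 : l ≠ []) (h : l.length ≤ n + 1) :
    chunks n l = [l] := by
  cases l with
  | nil => exact absurd rfl h0
  | cons x xs =>
    simp only [List.length_cons, Nat.add_le_add_iff_right] at h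
    rw [chunks_cons, List.take_of_length_le h, List.drop_eq_nil_of_le h, chunks_nil]

lemma go_spec (n : ℕ) : ∀ (xs : List α) (acc₁ : Array α) (acc₂ : Array (List α)),
    0 < acc₁.size → acc₁.size ≤ n + 1 →
    List.toChunks.go (n + 1) xs acc₁ acc₂ = acc₂.toList ++ chunks n (acc₁.toList ++ xs)
  | [], acc₁, acc₂, h1, h2 => by
    have : List.toChunks.go (n + 1) [] acc₁ acc₂ = (acc₂.push acc₁.toList).toList := rfl
    rw [this, Array.toList_push, List.append_nil,
      chunks_short n acc₁.toList (by
        intro h; rw [← Array.length_toList, h] at h1; simp at h1)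
      (by rw [Array.length_toList]; exact h2)]
  | x :: xs, acc₁, acc₂, h1, h2 => by
    have heq : List.toChunks.go (n + 1) (x :: xs) acc₁ acc₂ =
        if acc₁.size == n + 1 then
          List.toChunks.go (n + 1) xs ((Array.mkEmpty (n + 1)).push x) (acc₂.push acc₁.toList)
        else List.toChunks.go (n + 1) xs (acc₁.push x) acc₂ := rfl
    rw [heq]
    by_cases hs : acc₁.size = n + 1
    · simp only [hs, beq_self_eq_true, if_true]
      have hsz : ((Array.mkEmpty (n + 1) : Array α).push x).size = 1 := rfl
      rw [go_spec n xs ((Array.mkEmpty (n + 1)).push x) (acc₂.push acc₁.toList)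
        (by omega) (by omega)]
      have hlen : acc₁.toList.length = n + 1 := by rw [Array.length_toList]; exact hs
      have htl : ((Array.mkEmpty (n + 1) : Array α).push x).toList = [x] := rfl
      rw [htl, chunks_eq_cons n (acc₁.toList ++ x :: xs) (by simp),
        List.take_left' hlen, List.drop_left' hlen, Array.toList_push]
      simp
    · have : (acc₁.size == n + 1) = false := by simp [hs]
      simp only [this, if_false]
      have h1' : 0 < (acc₁.push x).size := by rw [Array.size_push]; omega
      have h2' : (acc₁.push x).size ≤ n + 1 := by rw [Array.size_push]; omega
      rw [go_spec n xs (acc₁.push x) acc₂ h1' h2', Array.toList_push]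
      simp

lemma toChunks_succ (n : ℕ) (l : List α) : l.toChunks (n + 1) = chunks n l := by
  cases l with
  | nil => rw [List.toChunks, chunks_nil]
  | cons x xs =>
    have : (x :: xs).toChunks (n + 1) = List.toChunks.go (n + 1) xs #[x] #[] := rfl
    rw [this, go_spec n xs #[x] #[] (by simp) (by simp)]
    simp

section Order

variable [LinearOrder α]

lemma lt_of_append_lt : ∀ (u s t : List α), u ++ s < u ++ t → s < t
  | [], s, t, h => h
  | a :: u, s, t, h => by
    have h' : List.Lex (· < ·) (a :: (u ++ s)) (a :: (u ++ t)) := h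
    cases h' with
    | rel h'' => exact absurd h'' (lt_irrefl a)
    | cons h'' => exact lt_of_append_lt u s t h''

lemma cons_le_cons_iff (a : α) (s t : List α) : a :: s ≤ a :: t ↔ s ≤ t := by
  constructor
  · intro h
    rcases lt_or_eq_of_le h with h' | h'
    · have h'' : List.Lex (· < ·) (a :: s) (a :: t) := h'
      cases h'' with
      | rel h3 => exact absurd h3 (lt_irrefl a)
      | cons h3 => exact le_of_lt h3
    · exact le_of_eq (by injection h')
  · exact List.cons_le_cons a

lemma take_le_take {A B : List α} (h : A ≤ B) (k : ℕ) : A.take k ≤ B.take k := by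
  rcases lt_or_eq_of_le h with h' | h'
  · clear h
    replace h' : List.Lex (· < ·) A B := h'
    induction h' generalizing k with
    | nil =>
      rw [List.take_nil]
      rcases k with _ | k
      · exact le_rfl
      · rw [List.take_succ_cons]
        exact le_of_lt (show List.Lex (· < ·) [] _ from .nil)
    | @rel a s b t hab =>
      cases k with
      | zero => simp
      | succ k =>
        exact le_of_lt (show List.Lex (· < ·) (a :: s.take k) (b :: t.take k) from .rel hab)
    | @cons a s t _ ih =>
      cases k with
      | zero => simp
      | succ k =>
        simp only [List.take_succ_cons]
        exact List.cons_le_cons a (ih k)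
  · subst h'; exact le_rfl

lemma key (n : ℕ) (r : List α → ℕ) : ∀ (N : ℕ) (A B : List α), A.length ≤ N →
    (∀ u, (u ∈ chunks n A ∨ u ∈ chunks n B) → ∀ v, (v ∈ chunks n A ∨ v ∈ chunks n B) →
      u < v → r u < r v) →
    A < B → (chunks n A).map r < (chunks n B).map r := by
  intro N
  induction N with
  | zero =>
    intro A B hA _ hAB
    rw [List.length_eq_zero_iff.mp (Nat.le_zero.mp hA)] at hAB ⊢
    replace hAB : List.Lex (· < ·) ([] : List α) B := hAB
    cases hAB with
    | nil =>
      rw [chunks_nil, chunks_cons]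
      exact List.nil_lt_cons _ _
  | succ N ih =>
    intro A B hA hr hAB
    cases A with
    | nil =>
      replace hAB : List.Lex (· < ·) ([] : List α) B := hAB
      cases hAB with
      | nil =>
        rw [chunks_nil, chunks_cons]
        exact List.nil_lt_cons _ _
    | cons a A₂ =>
      have hBne : B ≠ [] := by
        rintro rfl
        replace hAB : List.Lex (· < ·) (a :: A₂) [] := hAB
        cases hAB
      have hAne : (a :: A₂ : List α) ≠ [] := by simp
      set u := (a :: A₂).take (n + 1) with hu
      set v := B.take (n + 1) with hv
      have hcA : chunks n (a :: A₂) = u :: chunks n ((a :: A₂).drop (n + 1)) :=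
        chunks_eq_cons n _ hAne
      have hcB : chunks n B = v :: chunks n (B.drop (n + 1)) := chunks_eq_cons n _ hBne
      rcases lt_trichotomy u v with huv | huv | huv
      · have hru : r u < r v := by
          refine hr u (Or.inl ?_) v (Or.inr ?_) huv
          · rw [hcA]; exact List.mem_cons_self
          · rw [hcB]; exact List.mem_cons_self
        rw [hcA, hcB]
        exact (List.Lex.rel hru : List.Lex (· < ·) _ _)
      · -- equal first chunks
        have hA' : u ++ (a :: A₂).drop (n + 1) = a :: A₂ := List.take_append_drop _ _
        have hB' : v ++ B.drop (n + 1) = B := List.take_append_drop _ _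
        have hdrop : (a :: A₂).drop (n + 1) < B.drop (n + 1) := by
          apply lt_of_append_lt u
          rw [hA', huv, hB']
          exact hAB
        have hlen : ((a :: A₂).drop (n + 1)).length ≤ N := by
          simp only [List.length_cons] at hA
          simp only [List.length_drop, List.length_cons]
          omega
        have hr' : ∀ w, (w ∈ chunks n ((a :: A₂).drop (n + 1)) ∨
              w ∈ chunks n (B.drop (n + 1))) → ∀ w',
              (w' ∈ chunks n ((a :: A₂).drop (n + 1)) ∨ w' ∈ chunks n (B.drop (n + 1))) →
              w < w' → r w < r w' := by
          intro w hw w' hw' hww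
          refine hr w ?_ w' ?_ hww
          · rcases hw with h | h
            · exact Or.inl (by rw [hcA]; exact List.mem_cons_of_mem _ h)
            · exact Or.inr (by rw [hcB]; exact List.mem_cons_of_mem _ h)
          · rcases hw' with h | h
            · exact Or.inl (by rw [hcA]; exact List.mem_cons_of_mem _ h)
            · exact Or.inr (by rw [hcB]; exact List.mem_cons_of_mem _ h)
        have htail := ih _ _ hlen hr' hdrop
        rw [hcA, hcB, List.map_cons, List.map_cons, huv]
        exact (List.Lex.cons htail : List.Lex (· < ·) _ _)
      · exact absurd (take_le_take (le_of_lt hAB) (n + 1)) (not_le_of_gt huv)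

end Order

end StmtAux

/-- Renaming preserves lexicographic order: partition strings `A`, `B` into blocks of
length `m`, and replace each block by its rank `r`, where `r` is strictly monotone
(w.r.t. the lexicographic order) on the blocks occurring in `A` and `B`.
Then `A ≤lex B` iff `A' ≤lex B'`. -/
theorem stmt1 {α : Type*} [LinearOrder α] (m : ℕ) (hm : 0 < m) (A B : List α)
    (r : List α → ℕ)
    (hr : ∀ u ∈ A.toChunks m ++ B.toChunks m, ∀ v ∈ A.toChunks m ++ B.toChunks m,
      u < v → r u < r v) :
    A ≤ B ↔ (A.toChunks m).map r ≤ (B.toChunks m).map r := by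
  obtain ⟨n, rfl⟩ : ∃ n, m = n + 1 := ⟨m - 1, by omega⟩
  rw [StmtAux.toChunks_succ, StmtAux.toChunks_succ]
  have hr' : ∀ u, (u ∈ StmtAux.chunks n A ∨ u ∈ StmtAux.chunks n B) →
      ∀ v, (v ∈ StmtAux.chunks n A ∨ v ∈ StmtAux.chunks n B) → u < v → r u < r v := by
    intro u hu v hv huv
    refine hr u ?_ v ?_ huv <;>
      simp only [List.mem_append, StmtAux.toChunks_succ] at *
    · exact hu
    · exact hv
  rcases lt_trichotomy A B with h | h | h
  · exact ⟨fun _ => le_of_lt (StmtAux.key n r A.length A B le_rfl hr' h),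
      fun _ => le_of_lt h⟩
  · subst h; simp
  · have h' := StmtAux.key n r B.length B A le_rfl
      (fun u hu v hv => hr' u (Or.symm hu) v (Or.symm hv)) h
    exact ⟨fun hle => absurd (lt_of_lt_of_le h hle) (lt_irrefl _),
      fun hle => absurd (lt_of_lt_of_le h' hle) (lt_irrefl _)⟩
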